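/- Let Ω₃ := (3/2)Δ − (1/2)id₃ be the qutrit-to-qutrit channel, where Δ is the completely dephasing channel on M₃(ℂ) and id₃ is the identity channel. Then (id ⊗ Ω₃)(Φ₃) = ω₃ = (1/2)(P₃ − Φ₃), and consequently the channel tempered negativity satisfies N_τ(Ω₃) ≥ 2, i.e. E_N^τ(Ω₃) = log₂ N_τ(Ω₃) ≥ 1. -/

import Mathlib

open Matrix
open scoped ComplexOrder

section Defs

variable {ιA ιB : Type*}

def ptranspose (M : Matrix (ιA × ιB) (ιA × ιB) ℂ) : Matrix (ιA × ιB) (ιA × ιB) ℂ :=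
  Matrix.of fun p q => M (p.1, q.2) (q.1, p.2)

def IsPPT [Fintype ιA] [Fintype ιB] (M : Matrix (ιA × ιB) (ιA × ιB) ℂ) : Prop :=
  M.PosSemidef ∧ (ptranspose M).PosSemidef

def IsState {ι : Type*} [Fintype ι] (ρ : Matrix ι ι ℂ) : Prop :=
  ρ.PosSemidef ∧ ρ.trace = 1

def idTensor (ιR : Type*) (Φ : Matrix ιA ιA ℂ →ₗ[ℂ] Matrix ιB ιB ℂ) :
    Matrix (ιR × ιA) (ιR × ιA) ℂ →ₗ[ℂ] Matrix (ιR × ιB) (ιR × ιB) ℂ where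
  toFun M := Matrix.of fun p q => Φ (Matrix.of fun a b => M (p.1, a) (q.1, b)) p.2 q.2
  map_add' M N := by
    funext p q
    show Φ ((Matrix.of fun a b => M (p.1, a) (q.1, b)) + (Matrix.of fun a b => N (p.1, a) (q.1, b))) p.2 q.2 = _
    rw [map_add]
    rfl
  map_smul' c M := by
    funext p q
    show Φ (c • (Matrix.of fun a b => M (p.1, a) (q.1, b))) p.2 q.2 = _
    rw [_root_.map_smul]
    rfl

noncomputable def opNorm {ι : Type*} [Fintype ι] [DecidableEq ι] (M : Matrix ι ι ℂ) : ℝ :=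
  ‖Matrix.toEuclideanCLM (𝕜 := ℂ) (n := ι) M‖

noncomputable def traceNorm {ι : Type*} [Fintype ι] [DecidableEq ι] (M : Matrix ι ι ℂ) : ℝ :=
  (((Matrix.posSemidef_conjTranspose_mul_self M).1.eigenvectorUnitary.1 *
      Matrix.diagonal (((↑) : ℝ → ℂ) ∘ (√·) ∘ (Matrix.posSemidef_conjTranspose_mul_self M).1.eigenvalues) *
      (star (Matrix.posSemidef_conjTranspose_mul_self M).1.eigenvectorUnitary : Matrix ι ι ℂ)).trace).re

/-- The tempered negativity `N_τ(ρ|ω)`. -/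
noncomputable def temperedNegRel [Fintype ιA] [Fintype ιB] [DecidableEq ιA] [DecidableEq ιB]
    (ρ ω : Matrix (ιA × ιB) (ιA × ιB) ℂ) : ℝ :=
  sSup {t : ℝ | ∃ X : Matrix (ιA × ιB) (ιA × ιB) ℂ, X.IsHermitian ∧
    opNorm (ptranspose X) ≤ 1 ∧ opNorm X = ((X * ω).trace).re ∧ t = ((X * ρ).trace).re}

noncomputable def temperedNeg [Fintype ιA] [Fintype ιB] [DecidableEq ιA] [DecidableEq ιB]
    (ρ : Matrix (ιA × ιB) (ιA × ιB) ℂ) : ℝ :=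
  temperedNegRel ρ ρ

/-- The tempered PPT robustness `R^τ(ρ|ω)`, via `1 + 2 R^τ(ρ|ω) = sup {...}`. -/
noncomputable def temperedRobRel [Fintype ιA] [Fintype ιB] [DecidableEq ιA] [DecidableEq ιB]
    (ρ ω : Matrix (ιA × ιB) (ιA × ιB) ℂ) : ℝ :=
  (sSup {t : ℝ | ∃ X : Matrix (ιA × ιB) (ιA × ιB) ℂ, X.IsHermitian ∧
    (∀ W : Matrix (ιA × ιB) (ιA × ιB) ℂ, IsPPT W → |((X * W).trace).re| ≤ (W.trace).re) ∧
    opNorm X = ((X * ω).trace).re ∧ t = ((X * ρ).trace).re} - 1) / 2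

noncomputable def temperedRob [Fintype ιA] [Fintype ιB] [DecidableEq ιA] [DecidableEq ιB]
    (ρ : Matrix (ιA × ιB) (ιA × ιB) ℂ) : ℝ :=
  temperedRobRel ρ ρ

/-- The channel tempered negativity. -/
noncomputable def chanTemperedNeg [Fintype ιA] [Fintype ιB] [DecidableEq ιA] [DecidableEq ιB]
    (Λ : Matrix ιA ιA ℂ →ₗ[ℂ] Matrix ιB ιB ℂ) : ℝ :=
  sSup {t : ℝ | ∃ ρ : Matrix (ιA × ιA) (ιA × ιA) ℂ, IsState ρ ∧
    t = temperedNeg ((idTensor ιA Λ) ρ)}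

/-- The channel tempered robustness `R^τ(Λ'|Λ)`. -/
noncomputable def chanTemperedRobRel [Fintype ιA] [Fintype ιB] [DecidableEq ιA] [DecidableEq ιB]
    (Λ' Λ : Matrix ιA ιA ℂ →ₗ[ℂ] Matrix ιB ιB ℂ) : ℝ :=
  sSup {t : ℝ | ∃ ρ : Matrix (ιA × ιA) (ιA × ιA) ℂ, IsState ρ ∧
    t = temperedRobRel ((idTensor ιA Λ') ρ) ((idTensor ιA Λ) ρ)}

/-- The diamond norm. -/
noncomputable def diamondNorm [Fintype ιA] [Fintype ιB] [DecidableEq ιA] [DecidableEq ιB]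
    (Φ : Matrix ιA ιA ℂ →ₗ[ℂ] Matrix ιB ιB ℂ) : ℝ :=
  sSup {t : ℝ | ∃ ρ : Matrix (ιA × ιA) (ιA × ιA) ℂ, IsState ρ ∧
    t = traceNorm ((idTensor ιA Φ) ρ)}

/-- The `n`-fold tensor power of a linear map on matrices. -/
noncomputable def tensorPow [Fintype ιA] [DecidableEq ιA] (n : ℕ)
    (Λ : Matrix ιA ιA ℂ →ₗ[ℂ] Matrix ιB ιB ℂ) :
    Matrix (Fin n → ιA) (Fin n → ιA) ℂ →ₗ[ℂ] Matrix (Fin n → ιB) (Fin n → ιB) ℂ where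
  toFun M := Matrix.of fun p q => ∑ a : Fin n → ιA, ∑ b : Fin n → ιA,
      M a b * ∏ i, Λ (Matrix.single (a i) (b i) 1) (p i) (q i)
  map_add' M N := by
    funext p q
    simp [Matrix.add_apply, add_mul, Finset.sum_add_distrib]
  map_smul' c M := by
    funext p q
    simp [Matrix.smul_apply, Finset.mul_sum, mul_assoc]

/-- The `n`-fold tensor power of a bipartite state, regarded as bipartite across the `Aⁿ:Bⁿ` cut. -/
noncomputable def statePow (n : ℕ) (ρ : Matrix (ιA × ιB) (ιA × ιB) ℂ) :
    Matrix ((Fin n → ιA) × (Fin n → ιB)) ((Fin n → ιA) × (Fin n → ιB)) ℂ :=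
  Matrix.of fun p q => ∏ i, ρ (p.1 i, p.2 i) (q.1 i, q.2 i)

/-- The Choi matrix `J_Φ = (1/d_A) ∑_{ij} |i⟩⟨j| ⊗ Φ(|i⟩⟨j|)`. -/
noncomputable def choi [Fintype ιA] [DecidableEq ιA]
    (Φ : Matrix ιA ιA ℂ →ₗ[ℂ] Matrix ιB ιB ℂ) : Matrix (ιA × ιB) (ιA × ιB) ℂ :=
  Matrix.of fun p q => (Fintype.card ιA : ℂ)⁻¹ * Φ (Matrix.single p.1 q.1 1) p.2 q.2


/-- Complete positivity. -/
def IsCP [Fintype ιA] [Fintype ιB] (Φ : Matrix ιA ιA ℂ →ₗ[ℂ] Matrix ιB ιB ℂ) : Prop :=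
  ∀ (k : ℕ) (X : Matrix (Fin k × ιA) (Fin k × ιA) ℂ), X.PosSemidef →
    ((idTensor (Fin k) Φ) X).PosSemidef

/-- Trace preservation. -/
def IsTP [Fintype ιA] [Fintype ιB] (Φ : Matrix ιA ιA ℂ →ₗ[ℂ] Matrix ιB ιB ℂ) : Prop :=
  ∀ X : Matrix ιA ιA ℂ, (Φ X).trace = X.trace

/-- A quantum channel: completely positive and trace preserving. -/
def IsChannel [Fintype ιA] [Fintype ιB] (Φ : Matrix ιA ιA ℂ →ₗ[ℂ] Matrix ιB ιB ℂ) : Prop :=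
  IsCP Φ ∧ IsTP Φ

/-- A map is PPT-binding if `id_k ⊗ Φ` sends positive semidefinite matrices to PPT matrices. -/
def PPTBinding [Fintype ιA] [Fintype ιB] (Φ : Matrix ιA ιA ℂ →ₗ[ℂ] Matrix ιB ιB ℂ) : Prop :=
  ∀ (k : ℕ) (X : Matrix (Fin k × ιA) (Fin k × ιA) ℂ), X.PosSemidef →
    IsPPT ((idTensor (Fin k) Φ) X)

/-- A PPT-binding channel. -/
def PPTBindingChannel [Fintype ιA] [Fintype ιB] (Φ : Matrix ιA ιA ℂ →ₗ[ℂ] Matrix ιB ιB ℂ) : Prop :=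
  IsChannel Φ ∧ PPTBinding Φ

/-- The channel robustness with respect to PPT-binding channels. -/
noncomputable def RKE [Fintype ιA] [Fintype ιB] (Λ : Matrix ιA ιA ℂ →ₗ[ℂ] Matrix ιB ιB ℂ) : ℝ :=
  sInf {l : ℝ | 0 ≤ l ∧ ∃ Γ Θ : Matrix ιA ιA ℂ →ₗ[ℂ] Matrix ιB ιB ℂ,
    PPTBindingChannel Γ ∧ PPTBindingChannel Θ ∧ Λ + (l : ℂ) • Γ = ((1 + l : ℝ) : ℂ) • Θ}

/-- The PPT robustness of a state. -/
noncomputable def RPPT [Fintype ιA] [Fintype ιB] (ρ : Matrix (ιA × ιB) (ιA × ιB) ℂ) : ℝ :=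
  sInf {t : ℝ | ∃ δ : Matrix (ιA × ιB) (ιA × ιB) ℂ, IsPPT δ ∧ IsPPT (ρ + δ) ∧ (δ.trace).re = t}


end Defs

/-- The projector `P₃ = ∑ᵢ |ii⟩⟨ii|` onto the maximally correlated subspace of `ℂ³ ⊗ ℂ³`. -/
noncomputable def P3 : Matrix (Fin 3 × Fin 3) (Fin 3 × Fin 3) ℂ :=
  Matrix.of fun p q => if p.1 = p.2 ∧ q.1 = q.2 ∧ p.1 = q.1 then 1 else 0

/-- The maximally entangled two-qutrit state `Φ₃ = |Φ₃⟩⟨Φ₃|`, `|Φ₃⟩ = (1/√3) ∑ᵢ |ii⟩`. -/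
noncomputable def Phi3 : Matrix (Fin 3 × Fin 3) (Fin 3 × Fin 3) ℂ :=
  Matrix.of fun p q => if p.1 = p.2 ∧ q.1 = q.2 then 1 / 3 else 0

/-- The two-qutrit state `ω₃ = (1/2)(P₃ − Φ₃)`. -/
noncomputable def omega3 : Matrix (Fin 3 × Fin 3) (Fin 3 × Fin 3) ℂ :=
  (1 / 2 : ℂ) • (P3 - Phi3)

/-- The completely dephasing qutrit channel `Δ(X) = ∑ᵢ |i⟩⟨i| X |i⟩⟨i|`. -/
noncomputable def dephase : Matrix (Fin 3) (Fin 3) ℂ →ₗ[ℂ] Matrix (Fin 3) (Fin 3) ℂ where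
  toFun X := Matrix.of fun i j => if i = j then X i j else 0
  map_add' X Y := by
    funext i j
    by_cases h : i = j <;> simp [Matrix.add_apply, h]
  map_smul' c X := by
    funext i j
    by_cases h : i = j <;> simp [Matrix.smul_apply, h]

/-- The qutrit-to-qutrit channel `Ω₃ = (3/2)Δ − (1/2)id₃`. -/
noncomputable def Omega3 : Matrix (Fin 3) (Fin 3) ℂ →ₗ[ℂ] Matrix (Fin 3) (Fin 3) ℂ :=
  (3 / 2 : ℂ) • dephase - (1 / 2 : ℂ) • LinearMap.id


/-! ### Auxiliary material for the proof -/

section AuxDefs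

/-- The indicator of the diagonal of `Fin 3 × Fin 3`. -/
def dvAux : (Fin 3 × Fin 3) → ℂ := fun p => if p.1 = p.2 then 1 else 0

/-- The swap (flip) matrix on `ℂ³ ⊗ ℂ³`. -/
noncomputable def FswAux : Matrix (Fin 3 × Fin 3) (Fin 3 × Fin 3) ℂ :=
  Matrix.of fun p q => if p.1 = q.2 ∧ p.2 = q.1 then 1 else 0

/-- The tempered-negativity witness `X = 2 P₃ - 3 Φ₃`. -/
noncomputable def XwAux : Matrix (Fin 3 × Fin 3) (Fin 3 × Fin 3) ℂ := (2:ℂ) • P3 - (3:ℂ) • Phi3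

lemma P3_eq_diagonal : P3 = Matrix.diagonal dvAux := by
  funext p q
  obtain ⟨i, j⟩ := p; obtain ⟨k, l⟩ := q
  simp only [P3, dvAux, Matrix.of_apply, Matrix.diagonal_apply, Prod.mk.injEq]
  by_cases h1 : i = j <;> by_cases h2 : k = l <;> by_cases h3 : i = k <;> simp_all <;> aesop

lemma Phi3_eq_vmv : Phi3 = (3:ℂ)⁻¹ • Matrix.vecMulVec dvAux dvAux := by
  funext p q
  obtain ⟨i, j⟩ := p; obtain ⟨k, l⟩ := q
  simp only [Phi3, dvAux, Matrix.of_apply, Matrix.smul_apply, Matrix.vecMulVec_apply, smul_eq_mul]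
  by_cases h1 : i = j <;> by_cases h2 : k = l <;> simp_all <;> norm_num

lemma vmv_mul_vmv (a b c d : (Fin 3 × Fin 3) → ℂ) :
    Matrix.vecMulVec a b * Matrix.vecMulVec c d = (b ⬝ᵥ c) • Matrix.vecMulVec a d := by
  funext p q
  simp only [Matrix.mul_apply, Matrix.vecMulVec_apply, Matrix.smul_apply, dotProduct,
    smul_eq_mul, Finset.sum_mul]
  exact Finset.sum_congr rfl fun r _ => by ring

lemma dvAux_dot : dvAux ⬝ᵥ dvAux = 3 := by
  simp [dotProduct, dvAux, Fintype.sum_prod_type, Fin.sum_univ_three]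

lemma dvAux_sq : (fun p => dvAux p * dvAux p) = dvAux := by
  funext p; simp only [dvAux]; by_cases h : p.1 = p.2 <;> simp [h]

lemma P3_mul_P3 : P3 * P3 = P3 := by
  rw [P3_eq_diagonal, Matrix.diagonal_mul_diagonal]
  exact congrArg Matrix.diagonal dvAux_sq

lemma Phi3_mul_Phi3 : Phi3 * Phi3 = Phi3 := by
  rw [Phi3_eq_vmv, Matrix.smul_mul, Matrix.mul_smul, vmv_mul_vmv, dvAux_dot, smul_smul, smul_smul]
  norm_num

lemma P3_mul_Phi3 : P3 * Phi3 = Phi3 := by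
  rw [P3_eq_diagonal, Phi3_eq_vmv, Matrix.mul_smul]
  congr 1
  funext p q
  simp only [Matrix.diagonal_mul, Matrix.vecMulVec_apply]
  rw [show dvAux p * (dvAux p * dvAux q) = (dvAux p * dvAux p) * dvAux q by ring,
    congrFun dvAux_sq p]

lemma Phi3_mul_P3 : Phi3 * P3 = Phi3 := by
  rw [P3_eq_diagonal, Phi3_eq_vmv, Matrix.smul_mul]
  congr 1
  funext p q
  simp only [Matrix.mul_diagonal, Matrix.vecMulVec_apply]
  rw [show dvAux p * dvAux q * dvAux q = dvAux p * (dvAux q * dvAux q) by ring,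
    congrFun dvAux_sq q]

lemma P3_herm : P3ᴴ = P3 := by
  funext p q
  simp only [P3, Matrix.conjTranspose_apply, Matrix.of_apply]
  by_cases h1 : q.1 = q.2 <;> by_cases h2 : p.1 = p.2 <;> by_cases h3 : q.1 = p.1 <;>
    simp_all [eq_comm] <;> aesop

lemma Phi3_herm : Phi3ᴴ = Phi3 := by
  funext p q
  simp only [Phi3, Matrix.conjTranspose_apply, Matrix.of_apply]
  by_cases h1 : q.1 = q.2 <;> by_cases h2 : p.1 = p.2 <;> simp_all [eq_comm] <;> norm_num

lemma Fsw_mul_Fsw : FswAux * FswAux = 1 := by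
  funext p q
  fin_cases p <;> fin_cases q <;>
    simp [FswAux, Matrix.mul_apply, Fintype.sum_prod_type, Fin.sum_univ_three, Matrix.one_apply,
      Prod.ext_iff]

lemma P3_mul_Fsw : P3 * FswAux = P3 := by
  rw [P3_eq_diagonal]
  funext p q
  obtain ⟨i, j⟩ := p; obtain ⟨k, l⟩ := q
  simp only [Matrix.diagonal_mul, FswAux, dvAux, Matrix.of_apply, Matrix.diagonal_apply,
    Prod.mk.injEq]
  by_cases h1 : i = j <;> by_cases h2 : i = l <;> by_cases h3 : j = k <;> simp_all <;> aesop

lemma Fsw_mul_P3 : FswAux * P3 = P3 := by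
  rw [P3_eq_diagonal]
  funext p q
  obtain ⟨i, j⟩ := p; obtain ⟨k, l⟩ := q
  simp only [Matrix.mul_diagonal, FswAux, dvAux, Matrix.of_apply, Matrix.diagonal_apply,
    Prod.mk.injEq]
  by_cases h1 : k = l <;> by_cases h2 : i = l <;> by_cases h3 : j = k <;> simp_all <;> aesop

lemma Fsw_herm : FswAuxᴴ = FswAux := by
  funext p q
  obtain ⟨i, j⟩ := p; obtain ⟨k, l⟩ := q
  simp only [FswAux, Matrix.conjTranspose_apply, Matrix.of_apply]
  by_cases h1 : k = j <;> by_cases h2 : l = i <;> simp_all [eq_comm] <;> aesop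

lemma trace_P3 : P3.trace = 3 := by
  simp [Matrix.trace, Matrix.diag, P3, Fintype.sum_prod_type, Fin.sum_univ_three]
  norm_cast

lemma trace_Phi3 : Phi3.trace = 1 := by
  simp [Matrix.trace, Matrix.diag, Phi3, Fintype.sum_prod_type, Fin.sum_univ_three]

lemma ptranspose_Xw : ptranspose XwAux = (2:ℂ) • P3 - FswAux := by
  funext p q
  obtain ⟨i, j⟩ := p; obtain ⟨k, l⟩ := q
  simp only [ptranspose, XwAux, FswAux, P3, Phi3, Matrix.of_apply, Matrix.sub_apply,
    Matrix.smul_apply, smul_eq_mul]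
  by_cases h1 : i = l <;> by_cases h2 : k = j <;> by_cases h3 : i = k <;> by_cases h4 : i = j <;>
    simp_all <;> norm_num <;> aesop

lemma Xw_herm : XwAuxᴴ = XwAux := by
  simp [XwAux, Matrix.conjTranspose_sub, Matrix.conjTranspose_smul, P3_herm, Phi3_herm]

lemma ptXw_herm : (ptranspose XwAux)ᴴ = ptranspose XwAux := by
  rw [ptranspose_Xw]
  simp [Matrix.conjTranspose_sub, Matrix.conjTranspose_smul, P3_herm, Fsw_herm]

lemma ptXw_sq : (ptranspose XwAux) * (ptranspose XwAux) = 1 := by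
  rw [ptranspose_Xw]
  simp only [Matrix.sub_mul, Matrix.mul_sub, Matrix.smul_mul, Matrix.mul_smul, smul_smul,
    P3_mul_P3, P3_mul_Fsw, Fsw_mul_P3, Fsw_mul_Fsw]
  module

lemma Am_sq : ((2:ℂ) • (P3 - Phi3) - 1) * ((2:ℂ) • (P3 - Phi3) - 1) = 1 := by
  simp only [Matrix.sub_mul, Matrix.mul_sub, Matrix.smul_mul, Matrix.mul_smul, smul_smul,
    Matrix.one_mul, Matrix.mul_one, P3_mul_P3, P3_mul_Phi3, Phi3_mul_P3, Phi3_mul_Phi3]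
  module

lemma Am_herm : ((2:ℂ) • (P3 - Phi3) - 1)ᴴ = (2:ℂ) • (P3 - Phi3) - 1 := by
  simp [Matrix.conjTranspose_sub, Matrix.conjTranspose_smul, P3_herm, Phi3_herm]

lemma Bm_sq : ((1 : Matrix (Fin 3 × Fin 3) (Fin 3 × Fin 3) ℂ) - Phi3) * (1 - Phi3) = 1 - Phi3 := by
  simp only [Matrix.sub_mul, Matrix.mul_sub, Matrix.one_mul, Matrix.mul_one, Phi3_mul_Phi3]
  module

lemma Bm_herm : ((1 : Matrix (Fin 3 × Fin 3) (Fin 3 × Fin 3) ℂ) - Phi3)ᴴ = 1 - Phi3 := by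
  simp [Matrix.conjTranspose_sub, Phi3_herm]

lemma Xw_decomp : XwAux = ((2:ℂ) • (P3 - Phi3) - 1) + (1 - Phi3) := by
  rw [XwAux]; module

lemma Xw_mul_Q : XwAux * (P3 - Phi3) = (2:ℂ) • (P3 - Phi3) := by
  simp only [XwAux, Matrix.sub_mul, Matrix.mul_sub, Matrix.smul_mul, Matrix.mul_smul, smul_smul,
    P3_mul_P3, P3_mul_Phi3, Phi3_mul_P3, Phi3_mul_Phi3]
  module

lemma Xw_mul_omega3 : XwAux * omega3 = P3 - Phi3 := by
  rw [omega3, Matrix.mul_smul]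
  simp only [XwAux, Matrix.sub_mul, Matrix.mul_sub, Matrix.smul_mul, Matrix.mul_smul, smul_smul,
    P3_mul_P3, P3_mul_Phi3, Phi3_mul_P3, Phi3_mul_Phi3]
  module

lemma choi_eq_omega3 : (idTensor (Fin 3) Omega3) Phi3 = omega3 := by
  funext p q
  obtain ⟨r, b⟩ := p; obtain ⟨r', b'⟩ := q
  simp only [idTensor, Omega3, dephase, omega3, P3, Phi3, LinearMap.coe_mk, AddHom.coe_mk,
    Matrix.of_apply, LinearMap.sub_apply, LinearMap.smul_apply, LinearMap.id_apply,
    Matrix.smul_apply, Matrix.sub_apply, smul_eq_mul]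
  by_cases h1 : r = b <;> by_cases h2 : r' = b' <;> by_cases h3 : b = b' <;>
    simp_all <;> norm_num <;> aesop

lemma Phi3_posSemidef : Phi3.PosSemidef := by
  have hP : (Phi3ᴴ * Phi3).PosSemidef := Matrix.posSemidef_conjTranspose_mul_self Phi3
  rwa [Phi3_herm, Phi3_mul_Phi3] at hP

lemma Phi3_isState : IsState Phi3 := ⟨Phi3_posSemidef, trace_Phi3⟩

/-! ### Positive semidefinite entry bounds -/

lemma psd_diag_nonneg {ι : Type*} [Fintype ι] [DecidableEq ι] {ρ : Matrix ι ι ℂ}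
    (h : ρ.PosSemidef) (a : ι) : 0 ≤ ρ a a := by
  have h0 := h.dotProduct_mulVec_nonneg (Pi.single a 1)
  simpa [dotProduct, Matrix.mulVec, Pi.single_apply] using h0

lemma psd_diag_le_one {ι : Type*} [Fintype ι] [DecidableEq ι] {ρ : Matrix ι ι ℂ}
    (h : ρ.PosSemidef) (ht : ρ.trace = 1) (a : ι) : (ρ a a).re ≤ 1 := by
  have := Finset.single_le_sum (f := fun b => ρ b b)
    (fun b _ => psd_diag_nonneg h b) (Finset.mem_univ a)
  rw [show ∑ b, ρ b b = ρ.trace from rfl, ht] at this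
  exact_mod_cast (Complex.le_def.mp this).1

lemma psd_entry_le_one {ι : Type*} [Fintype ι] [DecidableEq ι] {ρ : Matrix ι ι ℂ}
    (h : ρ.PosSemidef) (ht : ρ.trace = 1) (p q : ι) : ‖ρ p q‖ ≤ 1 := by
  classical
  rcases eq_or_ne p q with rfl | hpq
  · calc ‖ρ p p‖ = (ρ p p).re := by
          have h0 := psd_diag_nonneg h p
          rw [Complex.le_def] at h0
          have him : (ρ p p).im = 0 := h0.2.symm
          rw [Complex.norm_def, Complex.normSq_apply, him]
          simp only [mul_zero, add_zero]
          rw [Real.sqrt_mul_self h0.1]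
        _ ≤ 1 := psd_diag_le_one h ht p
  rcases eq_or_ne (ρ p q) 0 with hz | hz
  · simp [hz]
  set z := ρ p q with hzdef
  set x : ι → ℂ := Pi.single p (-z) + Pi.single q (‖z‖ : ℂ) with hx
  have hQ := h.dotProduct_mulVec_nonneg x
  have hmv : ρ *ᵥ x = fun a => ρ a p * (-z) + ρ a q * (‖z‖ : ℂ) := by
    rw [hx, Matrix.mulVec_add, Matrix.mulVec_single, Matrix.mulVec_single]
    rfl
  have hqp : ρ q p = (starRingEnd ℂ) z := by
    have h1 := h.1
    rw [Matrix.IsHermitian] at h1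
    have h2 := congrFun (congrFun h1 q) p
    simpa [Matrix.conjTranspose_apply] using h2.symm
  have hstar : star x = Pi.single p (-(starRingEnd ℂ) z) + Pi.single q (‖z‖ : ℂ) := by
    funext a
    rcases eq_or_ne a p with rfl | hap
    · simp [hx, Pi.single_apply, hpq]
    · rcases eq_or_ne a q with rfl | haq
      · simp [hx, Pi.single_apply, hpq.symm, hap]
      · simp [hx, Pi.single_apply, hap, haq]
  have hQval : star x ⬝ᵥ (ρ *ᵥ x) =
      (-(starRingEnd ℂ) z) * (ρ p p * (-z) + z * (‖z‖ : ℂ)) +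
      (‖z‖ : ℂ) * ((starRingEnd ℂ) z * (-z) + ρ q q * (‖z‖ : ℂ)) := by
    rw [hstar, hmv, add_dotProduct]
    rw [single_dotProduct, single_dotProduct, ← hzdef, hqp]
  rw [hQval] at hQ
  have hre := (Complex.le_def.mp hQ).1
  have hrp := psd_diag_nonneg h p
  have hrq := psd_diag_nonneg h q
  have hip : (ρ p p).im = 0 := (Complex.le_def.mp hrp).2.symm
  have hiq : (ρ q q).im = 0 := (Complex.le_def.mp hrq).2.symm
  have hrp1 : (ρ p p).re ≤ 1 := psd_diag_le_one h ht p
  have hrq1 : (ρ q q).re ≤ 1 := psd_diag_le_one h ht q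
  have hrp0 : 0 ≤ (ρ p p).re := (Complex.le_def.mp hrp).1
  have hrq0 : 0 ≤ (ρ q q).re := (Complex.le_def.mp hrq).1
  have hnz : 0 < ‖z‖ := norm_pos_iff.mpr hz
  have hsq : z.re^2 + z.im^2 = ‖z‖^2 := by
    rw [Complex.sq_norm, Complex.normSq_apply]; ring
  simp only [Complex.zero_re, Complex.add_re, Complex.add_im, Complex.mul_re, Complex.mul_im,
    Complex.neg_re, Complex.neg_im, Complex.conj_re, Complex.conj_im, Complex.ofReal_re,
    Complex.ofReal_im, hip, hiq] at hre
  nlinarith [hre, hsq, mul_pos hnz hnz, hrp1, hrq1, hnz]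

/-! ### Operator-norm facts (via the scoped L2 operator norm) -/

section L2

open scoped Matrix.Norms.L2Operator

lemma opNorm_eq_norm {ι : Type*} [Fintype ι] [DecidableEq ι] (M : Matrix ι ι ℂ) :
    opNorm M = ‖M‖ := rfl

lemma opNorm_herm_idem_le {ι : Type*} [Fintype ι] [DecidableEq ι] {M : Matrix ι ι ℂ}
    (h : Mᴴ = M) (h2 : M * M = M) : opNorm M ≤ 1 := by
  rw [opNorm_eq_norm]
  have hh := Matrix.l2_opNorm_conjTranspose_mul_self M
  rw [h, h2] at hh
  nlinarith [norm_nonneg M]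

lemma opNorm_herm_invol {ι : Type*} [Fintype ι] [DecidableEq ι] [Nonempty ι] {M : Matrix ι ι ℂ}
    (h : Mᴴ = M) (h2 : M * M = 1) : opNorm M = 1 := by
  rw [opNorm_eq_norm]
  haveI : Nontrivial (Matrix ι ι ℂ) := by
    refine nontrivial_of_ne 0 1 fun hc => ?_
    obtain ⟨a⟩ := (inferInstance : Nonempty ι)
    have := congrFun (congrFun hc a) a
    simp [Matrix.one_apply] at this
  have hh := Matrix.l2_opNorm_conjTranspose_mul_self M
  rw [h, h2, norm_one] at hh
  nlinarith [norm_nonneg M]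

lemma entry_le_opNorm {ι : Type*} [Fintype ι] [DecidableEq ι] (M : Matrix ι ι ℂ) (i j : ι) :
    ‖M i j‖ ≤ opNorm M := by
  rw [opNorm_eq_norm]
  have h := M.l2_opNorm_mulVec (EuclideanSpace.single j 1)
  rw [EuclideanSpace.norm_single] at h
  simp only [norm_one, mul_one] at h
  refine le_trans ?_ h
  have hcomp : ((EuclideanSpace.equiv ι ℂ).symm <|
      M *ᵥ (EuclideanSpace.single j 1 : EuclideanSpace ℂ ι)) i = M i j := by
    show (M *ᵥ (Pi.single j 1)) i = M i j
    simp
  rw [← hcomp]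
  set y := (EuclideanSpace.equiv ι ℂ).symm <|
    M *ᵥ (EuclideanSpace.single j 1 : EuclideanSpace ℂ ι) with hy
  have he := EuclideanSpace.norm_eq y
  have h1 : ‖y i‖^2 ≤ ∑ k, ‖y k‖^2 :=
    Finset.single_le_sum (fun k _ => sq_nonneg ‖y k‖) (Finset.mem_univ i)
  rw [he]
  have h2 := Real.sq_sqrt (by positivity : (0:ℝ) ≤ ∑ k, ‖y k‖^2)
  nlinarith [Real.sqrt_nonneg (∑ k, ‖y k‖^2), norm_nonneg (y i)]

lemma opNorm_Xw : opNorm XwAux = 2 := by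
  have hle : opNorm XwAux ≤ 2 := by
    rw [opNorm_eq_norm, Xw_decomp]
    have h1 : ‖(2:ℂ) • (P3 - Phi3) - 1‖ = 1 := by
      rw [← opNorm_eq_norm]
      exact opNorm_herm_invol Am_herm Am_sq
    have h2 : ‖(1 : Matrix (Fin 3 × Fin 3) (Fin 3 × Fin 3) ℂ) - Phi3‖ ≤ 1 := by
      rw [← opNorm_eq_norm]
      exact opNorm_herm_idem_le Bm_herm Bm_sq
    calc ‖((2:ℂ) • (P3 - Phi3) - 1) + (1 - Phi3)‖
        ≤ ‖(2:ℂ) • (P3 - Phi3) - 1‖ + ‖(1 : Matrix (Fin 3 × Fin 3) (Fin 3 × Fin 3) ℂ) - Phi3‖ :=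
          norm_add_le _ _
      _ ≤ 2 := by rw [h1]; linarith
  have hQne : P3 - Phi3 ≠ 0 := by
    intro hc
    have := congrFun (congrFun hc ((0:Fin 3), (0:Fin 3))) ((0:Fin 3), (0:Fin 3))
    simp [Matrix.sub_apply, P3, Phi3] at this
    norm_num at this
  have hQpos : 0 < ‖P3 - Phi3‖ := norm_pos_iff.mpr hQne
  have hge : 2 ≤ opNorm XwAux := by
    rw [opNorm_eq_norm]
    have hmul : ‖XwAux * (P3 - Phi3)‖ ≤ ‖XwAux‖ * ‖P3 - Phi3‖ := norm_mul_le _ _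
    rw [Xw_mul_Q] at hmul
    have hsmul : ‖(2:ℂ) • (P3 - Phi3)‖ = 2 * ‖P3 - Phi3‖ := by
      rw [norm_smul]
      norm_num
    rw [hsmul] at hmul
    exact le_of_mul_le_mul_right (by linarith) hQpos
  linarith

end L2

/-! ### Entry bounds for the output of `id ⊗ Ω₃` -/

lemma omegaOut_entry_le {ρ : Matrix ((Fin 3) × (Fin 3)) ((Fin 3) × (Fin 3)) ℂ}
    (hρ : IsState ρ) (p q : (Fin 3) × (Fin 3)) :
    ‖((idTensor (Fin 3) Omega3) ρ) p q‖ ≤ 2 := by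
  obtain ⟨r, b⟩ := p; obtain ⟨r', b'⟩ := q
  have hent : ∀ a c, ‖ρ a c‖ ≤ 1 := psd_entry_le_one hρ.1 hρ.2
  simp only [idTensor, Omega3, dephase, LinearMap.coe_mk, AddHom.coe_mk, Matrix.of_apply,
    LinearMap.sub_apply, LinearMap.smul_apply, LinearMap.id_apply, Matrix.smul_apply,
    Matrix.sub_apply, smul_eq_mul]
  change ‖3 / 2 * (if b = b' then ρ (r, b) (r', b') else 0) - 1 / 2 * ρ (r, b) (r', b')‖ ≤ 2
  by_cases h3 : b = b'
  · simp only [if_pos h3]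
    have : (3:ℂ)/2 * ρ (r, b) (r', b') - 1/2 * ρ (r, b) (r', b') = ρ (r, b) (r', b') := by ring
    rw [this]
    exact le_trans (hent _ _) (by norm_num)
  · simp only [if_neg h3]
    rw [show (3:ℂ)/2 * 0 - 1/2 * ρ (r, b) (r', b') = -(1/2 * ρ (r, b) (r', b')) by ring]
    rw [norm_neg, norm_mul]
    have := hent (r, b) (r', b')
    have hh : ‖(1:ℂ)/2‖ = 1/2 := by norm_num
    rw [hh]
    nlinarith [norm_nonneg (ρ (r, b) (r', b'))]

/-- Any element of the tempered-negativity feasible set is bounded by `162` whenever the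
entries of the underlying state are bounded by `2`. -/
lemma tneg_elt_bound {σ ω : Matrix (Fin 3 × Fin 3) (Fin 3 × Fin 3) ℂ}
    (hσ : ∀ p q, ‖σ p q‖ ≤ 2) {t : ℝ}
    (ht : ∃ X, X.IsHermitian ∧ opNorm (ptranspose X) ≤ 1 ∧
      opNorm X = ((X * ω).trace).re ∧ t = ((X * σ).trace).re) :
    t ≤ 162 := by
  obtain ⟨X, -, hX2, -, rfl⟩ := ht
  have hXent : ∀ a c, ‖X a c‖ ≤ 1 := by
    intro a c
    have h1 := entry_le_opNorm (ptranspose X) (a.1, c.2) (c.1, a.2)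
    have h2 : ptranspose X (a.1, c.2) (c.1, a.2) = X a c := rfl
    rw [h2] at h1
    exact le_trans h1 hX2
  have hterm : ∀ p : Fin 3 × Fin 3, ‖(X * σ) p p‖ ≤ 18 := by
    intro p
    rw [Matrix.mul_apply]
    calc ‖∑ r, X p r * σ r p‖ ≤ ∑ r, ‖X p r * σ r p‖ := norm_sum_le _ _
      _ ≤ ∑ _r : Fin 3 × Fin 3, (2:ℝ) := by
          refine Finset.sum_le_sum fun r _ => ?_
          rw [norm_mul]
          have h1 := hXent p r
          have h2 := hσ r p
          nlinarith [norm_nonneg (X p r), norm_nonneg (σ r p)]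
      _ = 18 := by simp; norm_num
  calc ((X * σ).trace).re ≤ ‖((X * σ).trace)‖ := Complex.re_le_norm _
    _ = ‖∑ p, (X * σ) p p‖ := rfl
    _ ≤ ∑ p, ‖(X * σ) p p‖ := norm_sum_le _ _
    _ ≤ ∑ _p : Fin 3 × Fin 3, (18:ℝ) := Finset.sum_le_sum fun p _ => hterm p
    _ = 162 := by simp; norm_num

end AuxDefs

/-- **The Choi state of `Ω₃` is `ω₃`, and its channel tempered negativity is at least 2**,
i.e. its tempered logarithmic negativity is at least 1. -/
theorem chanTemperedNeg_Omega3 :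
    (idTensor (Fin 3) Omega3) Phi3 = omega3 ∧
    2 ≤ chanTemperedNeg Omega3 ∧
    1 ≤ Real.logb 2 (chanTemperedNeg Omega3) := by
  have hchoi : (idTensor (Fin 3) Omega3) Phi3 = omega3 := choi_eq_omega3
  have htr : ((XwAux * omega3).trace).re = 2 := by
    rw [Xw_mul_omega3, Matrix.trace_sub, trace_P3, trace_Phi3]
    norm_num
  have hXherm : XwAux.IsHermitian := Xw_herm
  have hptle : opNorm (ptranspose XwAux) ≤ 1 := le_of_eq (opNorm_herm_invol ptXw_herm ptXw_sq)
  set σ₀ := (idTensor (Fin 3) Omega3) Phi3 with hσ₀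
  have hσ₀ent : ∀ p q, ‖σ₀ p q‖ ≤ 2 := omegaOut_entry_le Phi3_isState
  have h2le : (2:ℝ) ≤ temperedNeg σ₀ := by
    unfold temperedNeg temperedNegRel
    refine le_csSup ⟨162, fun t ht => tneg_elt_bound hσ₀ent ht⟩ ?_
    refine ⟨XwAux, hXherm, hptle, ?_, ?_⟩
    · rw [hchoi, opNorm_Xw, htr]
    · rw [hchoi, htr]
  have hchan : (2:ℝ) ≤ chanTemperedNeg Omega3 := by
    refine le_trans h2le ?_
    unfold chanTemperedNeg
    refine le_csSup ⟨162, fun t ht => ?_⟩ ⟨Phi3, Phi3_isState, rfl⟩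
    obtain ⟨ρ, hρ, rfl⟩ := ht
    unfold temperedNeg temperedNegRel
    exact Real.sSup_le (fun x hx => tneg_elt_bound (omegaOut_entry_le hρ) hx) (by norm_num)
  refine ⟨hchoi, hchan, ?_⟩
  calc (1:ℝ) = Real.logb 2 2 := (Real.logb_self_eq_one (b := 2) (by norm_num)).symm
    _ ≤ Real.logb 2 (chanTemperedNeg Omega3) :=
        Real.logb_le_logb_of_le (b := 2) (by norm_num) (by norm_num) hchan
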